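/- arXiv:math/9807091 — 4 statements merged into one kernel-verified Lean document; each statement's English description precedes it below -/
import Mathlib

section
/- Let A be a C*-algebra and u = (a_{ij}) a 3×3 magic unitary over A. Then all the entries a_{ij} commute with one another; consequently the universal C*-algebra generated by a 3×3 magic unitary is commutative. -/
private lemma mu_sum3 {M : Type*} [AddCommMonoid M] (f : Fin 3 → M) {j l n : Fin 3}
    (hjl : j ≠ l) (hjn : j ≠ n) (hln : l ≠ n) : f j + f l + f n = ∑ x, f x := by
  have huniv : ({j, l, n} : Finset (Fin 3)) = Finset.univ := by
    apply Finset.eq_univ_of_card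
    rw [Finset.card_insert_of_notMem (by simp [hjl, hjn]),
      Finset.card_insert_of_notMem (by simp [hln]), Finset.card_singleton]
    rfl
  rw [← huniv, Finset.sum_insert (by simp [hjl, hjn]), Finset.sum_insert (by simp [hln]),
    Finset.sum_singleton, add_assoc]

/-- All entries of a `3 × 3` magic unitary over a unital C*-algebra commute
with one another. -/
theorem magic_unitary_three_by_three_commutative
    {A : Type*} [NormedRing A] [StarRing A] [CStarRing A] [CompleteSpace A]
    [NormedAlgebra ℂ A] [StarModule ℂ A]
    (a : Fin 3 → Fin 3 → A)
    (hidem : ∀ i j, a i j * a i j = a i j)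
    (hsa : ∀ i j, star (a i j) = a i j)
    (hrow : ∀ i, ∑ j, a i j = 1)
    (hcol : ∀ j, ∑ i, a i j = 1) :
    ∀ i j k l, Commute (a i j) (a k l) := by
  letI : CStarAlgebra A := {}
  letI := CStarAlgebra.spectralOrder A
  haveI := CStarAlgebra.spectralOrderedRing A
  -- orthogonality of three projections summing to 1
  have horth : ∀ p q r : A, p * p = p → star p = p → q * q = q → star q = q →
      r * r = r → star r = r → p + q + r = 1 → p * q = 0 := by
    intro p q r hp hsp hq hsq hr hsr hsum
    have hqnn : (0 : A) ≤ q := by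
      have := star_mul_self_nonneg q; rwa [hsq, hq] at this
    have hrnn : (0 : A) ≤ r := by
      have := star_mul_self_nonneg r; rwa [hsr, hr] at this
    have hconj : p * q * p + p * r * p = 0 := by
      have h := congrArg (fun x => p * x * p) hsum
      simp only [mul_add, add_mul, mul_one] at h
      rw [show p * p * p = p by rw [hp, hp], hp, add_assoc] at h
      exact (add_eq_left).mp h
    have hpqp : p * q * p = 0 := by
      have h1 : (0 : A) ≤ p * q * p := by
        have := star_left_conjugate_nonneg hqnn p; rwa [hsp] at this
      have h2 : (0 : A) ≤ p * r * p := by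
        have := star_left_conjugate_nonneg hrnn p; rwa [hsp] at this
      refine le_antisymm ?_ h1
      calc p * q * p = -(p * r * p) := eq_neg_of_add_eq_zero_left hconj
        _ ≤ 0 := neg_nonpos.mpr h2
    have hqp : q * p = 0 := by
      have hnorm : star (q * p) * (q * p) = 0 := by
        rw [star_mul, hsq, hsp, ← mul_assoc, mul_assoc p q q, hq]
        exact hpqp
      have h := CStarRing.norm_star_mul_self (x := q * p)
      rw [hnorm, norm_zero] at h
      exact norm_eq_zero.mp (mul_self_eq_zero.mp h.symm)
    calc p * q = star (q * p) := by rw [star_mul, hsq, hsp]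
      _ = 0 := by rw [hqp, star_zero]
  have hthird : ∀ x y : Fin 3, x ≠ y → ∃ z, x ≠ z ∧ y ≠ z := by decide
  -- same-row orthogonality
  have orthR : ∀ i j l, j ≠ l → a i j * a i l = 0 := by
    intro i j l hjl
    obtain ⟨n, hjn, hln⟩ := hthird j l hjl
    exact horth _ _ _ (hidem i j) (hsa i j) (hidem i l) (hsa i l) (hidem i n) (hsa i n)
      ((mu_sum3 (a i) hjl hjn hln).trans (hrow i))
  -- same-column orthogonality
  have orthC : ∀ i k j, i ≠ k → a i j * a k j = 0 := by
    intro i k j hik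
    obtain ⟨m, him, hkm⟩ := hthird i k hik
    exact horth _ _ _ (hidem i j) (hsa i j) (hidem k j) (hsa k j) (hidem m j) (hsa m j)
      ((mu_sum3 (fun x => a x j) hik him hkm).trans (hcol j))
  -- key identity: p * q = p * r for entries in pairwise distinct rows and columns
  have key : ∀ i j k l m n, i ≠ k → i ≠ m → k ≠ m → j ≠ l → j ≠ n → l ≠ n →
      a i j * a k l = a i j * a m n := by
    intro i j k l m n hik him hkm hjl hjn hln
    have hrk : a k j + a k l + a k n = 1 := (mu_sum3 (a k) hjl hjn hln).trans (hrow k)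
    have hcn : a i n + a k n + a m n = 1 :=
      (mu_sum3 (fun x => a x n) hik him hkm).trans (hcol n)
    have h1 : a i j * a k j = 0 := orthC i k j hik
    have h2 : a i j * a i n = 0 := orthR i j n hjn
    have e1 : a k l = 1 - a k j - a k n := by rw [← hrk]; abel
    have e2 : a k n = 1 - a i n - a m n := by rw [← hcn]; abel
    calc a i j * a k l = a i j * (1 - a k j - a k n) := by rw [← e1]
      _ = a i j - a i j * a k n := by rw [mul_sub, mul_sub, mul_one, h1, sub_zero]
      _ = a i j - a i j * (1 - a i n - a m n) := by rw [← e2]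
      _ = a i j * a m n := by
          rw [mul_sub, mul_sub, mul_one, h2, sub_zero, sub_sub_cancel]
  intro i j k l
  rcases eq_or_ne i k with rfl | hik
  · rcases eq_or_ne j l with rfl | hjl
    · exact Commute.refl _
    · show a i j * a i l = a i l * a i j
      rw [orthR i j l hjl, orthR i l j hjl.symm]
  · rcases eq_or_ne j l with rfl | hjl
    · show a i j * a k j = a k j * a i j
      rw [orthC i k j hik, orthC k i j hik.symm]
    · obtain ⟨m, him, hkm⟩ := hthird i k hik
      obtain ⟨n, hjn, hln⟩ := hthird j l hjl
      have E1 := key i j k l m n hik him hkm hjl hjn hln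
      have E2 := key k l m n i j hkm hik.symm him.symm hln hjl.symm hjn.symm
      have E3 := key m n i j k l him.symm hkm.symm hik hjn.symm hln.symm hjl
      have S1 : a k l * a i j = a m n * a i j := by
        have := congrArg star E1
        simpa only [star_mul, hsa] using this
      have S2 : a m n * a k l = a i j * a k l := by
        have := congrArg star E2
        simpa only [star_mul, hsa] using this
      show a i j * a k l = a k l * a i j
      rw [S1, E3, S2]
end

section
/- Let A be a *-algebra with elements a^{kl}_{ij} (i,j,k,l = 1,...,n) satisfying: (i) Σ_v a^{kv}_{ij} a^{vl}_{rs} = δ_{jr} a^{kl}_{is}; (ii) (a^{kl}_{ij})* = a^{lk}_{ji}; (iii) Σ_r a^{kl}_{rr} = δ_{kl}; (iv) Σ_r a^{rr}_{kl} = δ_{kl}. Then the n²×n² matrix u with entries u_{(kl),(ij)} = a^{kl}_{ij} satisfies u* u = I, i.e., Σ_{k,l} (a^{kl}_{ij})* a^{kl}_{rs} = δ_{ir} δ_{js} · 1. -/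
/-- The defining relations of the quantum automorphism group of `Mₙ` imply
left-unitarity of the matrix of generators:
`∑ k l, star (a k l i j) * a k l r s = δ_{ir} δ_{js}`. Here `a k l i j`
denotes `a^{kl}_{ij}`. -/
theorem Mn_relations_imply_left_unitary
    {A : Type*} [Ring A] [StarRing A]
    {n : ℕ} (a : Fin n → Fin n → Fin n → Fin n → A)
    (h1 : ∀ i j k l r s, ∑ v, a k v i j * a v l r s =
      if j = r then a k l i s else 0)
    (h2 : ∀ i j k l, star (a k l i j) = a l k j i)
    (h3 : ∀ k l, ∑ r, a k l r r = if k = l then 1 else 0)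
    (h4 : ∀ k l, ∑ r, a r r k l = if k = l then 1 else 0) :
    ∀ i j r s, ∑ k, ∑ l, star (a k l i j) * a k l r s =
      if i = r ∧ j = s then 1 else 0 := by
  intro i j r s
  simp only [h2]
  rw [Finset.sum_comm]
  have : ∀ l : Fin n, ∑ k, a l k j i * a k l r s =
      if i = r then a l l j s else 0 := fun l => h1 j i l l r s
  simp only [this]
  by_cases hir : i = r
  · simp [hir, h4, and_comm]
  · simp [hir]
end

section
/- Let A be a *-algebra and (a_{ij}) an n×n matrix over A such that both u = (a_{ij}) and ū = (a_{ij}*) are unitary in M_n(A). Define b^{kl}_{ij} = a_{ki} a_{lj}* for i,j,k,l = 1,...,n. Then the b^{kl}_{ij} satisfy the quantum automorphism group relations for M_n: (i) Σ_v b^{kv}_{ij} b^{vl}_{rs} = δ_{jr} b^{kl}_{is}; (ii) (b^{kl}_{ij})* = b^{lk}_{ji}; (iii) Σ_r b^{kl}_{rr} = δ_{kl}; (iv) Σ_r b^{rr}_{kl} = δ_{kl}. -/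
/-- If both `u = (a_{ij})` and its entrywise conjugate are unitary matrices over
a unital *-algebra `A`, then `b^{kl}_{ij} = a_{ki} * star (a_{lj})` satisfies
the defining relations of the quantum automorphism group of `Mₙ`. -/
theorem Au_maps_to_Aaut_Mn
    {A : Type*} [Ring A] [StarRing A]
    {n : ℕ} (a : Fin n → Fin n → A)
    (hu1 : ∀ i j, ∑ k, a i k * star (a j k) = if i = j then 1 else 0)
    (hu2 : ∀ i j, ∑ k, star (a k i) * a k j = if i = j then 1 else 0)
    (hu3 : ∀ i j, ∑ k, star (a i k) * a j k = if i = j then 1 else 0)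
    (hu4 : ∀ i j, ∑ k, a k i * star (a k j) = if i = j then 1 else 0)
    (b : Fin n → Fin n → Fin n → Fin n → A)
    (hb : ∀ i j k l, b k l i j = a k i * star (a l j)) :
    (∀ i j k l r s, ∑ v, b k v i j * b v l r s =
      if j = r then b k l i s else 0) ∧
    (∀ i j k l, star (b k l i j) = b l k j i) ∧
    (∀ k l, ∑ r, b k l r r = if k = l then 1 else 0) ∧
    (∀ k l, ∑ r, b r r k l = if k = l then 1 else 0) := by
  refine ⟨fun i j k l r s => ?_, fun i j k l => ?_, fun k l => ?_, fun k l => ?_⟩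
  · have : ∑ v, b k v i j * b v l r s
        = a k i * (∑ v, star (a v j) * a v r) * star (a l s) := by
      rw [Finset.mul_sum, Finset.sum_mul]
      refine Finset.sum_congr rfl fun v _ => ?_
      simp only [hb, mul_assoc]
    rw [this, hu2]
    by_cases h : j = r <;> simp [h, hb]
  · rw [hb, hb, star_mul, star_star]
  · simp only [hb, hu1]
  · simp only [hb, hu4]
end

section
/- Let A be a *-algebra and let u = (a^{kl}_{ij}) be an n²×n² matrix over A indexed by pairs, and Q = (q^{kl}_{ij}) an invertible matrix in M_n(ℂ) ⊗ M_n(ℂ) with inverse Q̃ = (q̃^{kl}_{ij}). Define P and P̃ by p^{kl}_{ij} = q^{lk}_{ij} and p̃^{kl}_{ij} = q̃^{kl}_{ji}. Suppose u satisfies (a^{kl}_{ij})* = a^{lk}_{ji} and u* Q u Q^{-1} = I = Q u Q^{-1} u*. Then P̃ = P^{-1} and u^t P u P^{-1} = I = P u P^{-1} u^t; in particular u^t is invertible in M_{n²}(A). -/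
open Matrix

/-- If a matrix `u = (a^{kl}_{ij})` over a *-algebra, indexed by pairs,
satisfies `(a^{kl}_{ij})* = a^{lk}_{ji}` and `u* Q u Q⁻¹ = 1 = Q u Q⁻¹ u*`
for an invertible scalar matrix `Q` with inverse `Q̃`, then for the matrices
`P`, `P̃` defined by `p^{kl}_{ij} = q^{lk}_{ij}` and `p̃^{kl}_{ij} = q̃^{kl}_{ji}`
one has `P̃ = P⁻¹` and `uᵀ P u P⁻¹ = 1 = P u P⁻¹ uᵀ`; in particular `uᵀ` is
invertible. -/
theorem conjugate_relations_give_transpose_invertible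
    {A : Type*} [Ring A] [StarRing A] [Algebra ℂ A]
    {n : ℕ} (u : Matrix (Fin n × Fin n) (Fin n × Fin n) A)
    (Q Qt : Matrix (Fin n × Fin n) (Fin n × Fin n) ℂ)
    (hQ : Q * Qt = 1 ∧ Qt * Q = 1)
    (hstar : ∀ k l i j, star (u (k, l) (i, j)) = u (l, k) (j, i))
    (hrel : uᴴ * (Q.map (algebraMap ℂ A)) * u * (Qt.map (algebraMap ℂ A)) = 1 ∧
      (Q.map (algebraMap ℂ A)) * u * (Qt.map (algebraMap ℂ A)) * uᴴ = 1)
    (P Pt : Matrix (Fin n × Fin n) (Fin n × Fin n) ℂ)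
    (hP : ∀ k l i j, P (k, l) (i, j) = Q (l, k) (i, j))
    (hPt : ∀ k l i j, Pt (k, l) (i, j) = Qt (k, l) (j, i)) :
    (P * Pt = 1 ∧ Pt * P = 1) ∧
    (uᵀ * (P.map (algebraMap ℂ A)) * u * (Pt.map (algebraMap ℂ A)) = 1 ∧
      (P.map (algebraMap ℂ A)) * u * (Pt.map (algebraMap ℂ A)) * uᵀ = 1) ∧
    IsUnit uᵀ := by
  set e : (Fin n × Fin n) ≃ (Fin n × Fin n) := Equiv.prodComm (Fin n) (Fin n) with he
  have hPeq : P = Q.submatrix ⇑e ⇑(Equiv.refl (Fin n × Fin n)) := by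
    ext ⟨k, l⟩ ⟨i, j⟩
    simp [he, hP k l i j, Matrix.submatrix_apply, Equiv.prodComm_apply]
  have hPteq : Pt = Qt.submatrix ⇑(Equiv.refl (Fin n × Fin n)) ⇑e := by
    ext ⟨k, l⟩ ⟨i, j⟩
    simp [he, hPt k l i j, Matrix.submatrix_apply, Equiv.prodComm_apply]
  have huT : uᵀ = uᴴ.submatrix ⇑e ⇑e := by
    ext ⟨k, l⟩ ⟨i, j⟩
    simp [he, Matrix.submatrix_apply, Matrix.conjTranspose_apply,
      Matrix.transpose_apply, hstar]
  have h1 : P * Pt = 1 := by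
    rw [hPeq, hPteq, Matrix.submatrix_mul_equiv, hQ.1, Matrix.submatrix_one_equiv]
  have h2 : Pt * P = 1 := by
    rw [hPeq, hPteq, Matrix.submatrix_mul_equiv, hQ.2, Matrix.submatrix_one_equiv]
  set φ := algebraMap ℂ A with hφ
  have hPm : P.map φ = (Q.map φ).submatrix ⇑e ⇑(Equiv.refl (Fin n × Fin n)) := by
    rw [hPeq]; ext i j; simp [Matrix.submatrix_apply, Matrix.map_apply]
  have hPtm : Pt.map φ = (Qt.map φ).submatrix ⇑(Equiv.refl (Fin n × Fin n)) ⇑e := by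
    rw [hPteq]; ext i j; simp [Matrix.submatrix_apply, Matrix.map_apply]
  have hu : u = u.submatrix ⇑(Equiv.refl (Fin n × Fin n)) ⇑(Equiv.refl (Fin n × Fin n)) := by
    ext i j; simp [Matrix.submatrix_apply]
  have h3 : uᵀ * (P.map φ) * u * (Pt.map φ) = 1 := by
    rw [huT, hPm, hPtm, Matrix.submatrix_mul_equiv]
    nth_rewrite 2 [hu]
    rw [Matrix.submatrix_mul_equiv, Matrix.submatrix_mul_equiv, hrel.1,
      Matrix.submatrix_one_equiv]
  have h4 : (P.map φ) * u * (Pt.map φ) * uᵀ = 1 := by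
    rw [huT, hPm, hPtm]
    nth_rewrite 1 [hu]
    rw [Matrix.submatrix_mul_equiv, Matrix.submatrix_mul_equiv, Matrix.submatrix_mul_equiv,
      hrel.2, Matrix.submatrix_one_equiv]
  refine ⟨⟨h1, h2⟩, ⟨h3, h4⟩, ?_⟩
  exact ⟨⟨uᵀ, (P.map φ) * u * (Pt.map φ), by
    simpa [mul_assoc] using h3, by simpa [mul_assoc] using h4⟩, rfl⟩
end
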